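/- Let n ≥ 1 and s ∈ (0,1). Let f ∈ L^∞(ℝⁿ) be compactly supported, and for each k ∈ ℤ set a_k := |{x ∈ ℝⁿ : |f(x)| > 2^k}|. Then ∫_{ℝⁿ}∫_{ℝⁿ} |f(x)−f(y)|²/|x−y|^{n+2s} dx dy ≥ c(n,s) Σ_{k∈ℤ, a_k≠0} a_{k+1} a_k^{−2s/n} 2^{2k}, for a suitable constant c(n,s) > 0 depending only on n and s. -/

import Mathlib

open MeasureTheory Set
open scoped ENNReal

lemma geom_aux (d : ℝ) :
    ∑' k : ℤ, (if (2:ℝ) ^ k < d then ENNReal.ofReal ((4:ℝ) ^ k) else 0) ≤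
      ENNReal.ofReal (4 / 3 * d ^ 2) := by
  by_cases hd : 0 < d
  · set m : ℤ := Int.log 2 d with hm
    have h2m : (2:ℝ) ^ m ≤ d := by
      have := Int.zpow_log_le_self (b := 2) (by norm_num) hd
      push_cast at this
      exact this
    have hlt : d < (2:ℝ) ^ (m + 1) := by
      have := Int.lt_zpow_succ_log_self (b := 2) (by norm_num) d
      push_cast at this
      exact this
    have hkm : ∀ k : ℤ, (2:ℝ) ^ k < d → k ≤ m := by
      intro k hk
      have : (2:ℝ) ^ k < (2:ℝ) ^ (m + 1) := hk.trans hlt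
      have := (zpow_lt_zpow_iff_right₀ (by norm_num : (1:ℝ) < 2)).mp this
      omega
    set F : ℤ → ℝ≥0∞ := fun k => if k ≤ m then ENNReal.ofReal ((4:ℝ) ^ k) else 0 with hF
    have step1 : ∑' k : ℤ, (if (2:ℝ) ^ k < d then ENNReal.ofReal ((4:ℝ) ^ k) else 0) ≤
        ∑' k : ℤ, F k := by
      refine ENNReal.tsum_le_tsum fun k => ?_
      by_cases h : (2:ℝ) ^ k < d
      · simp only [if_pos h, hF, if_pos (hkm k h)]
        exact le_rfl
      · simp [if_neg h]
    have step2 : ∑' k : ℤ, F k = ∑' j : ℕ, F (m - j) := by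
      refine (Function.Injective.tsum_eq (g := fun j : ℕ => m - (j : ℤ)) ?_ ?_).symm
      · intro a b hab
        simp only at hab
        omega
      · intro k hk
        have hkm' : k ≤ m := by
          by_contra h
          exact hk (by simp [hF, h])
        exact ⟨(m - k).toNat, by show m - ((m - k).toNat : ℤ) = k; omega⟩
    have hFval : ∀ j : ℕ, F (m - j) = ENNReal.ofReal ((4:ℝ) ^ m) * ENNReal.ofReal (1/4) ^ j := by
      intro j
      have h1 : ((m : ℤ) - (j:ℤ)) ≤ m := by omega
      have h2 : (4:ℝ) ^ (m - (j:ℤ)) = (4:ℝ) ^ m * (1/4 : ℝ) ^ j := by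
        rw [zpow_sub₀ (by norm_num : (4:ℝ) ≠ 0), zpow_natCast, div_pow]
        norm_num
        ring
      rw [hF]
      simp only [if_pos h1, h2]
      rw [ENNReal.ofReal_mul (by positivity), ENNReal.ofReal_pow (by norm_num)]
    have step3 : ∑' j : ℕ, F (m - j) = ENNReal.ofReal ((4:ℝ) ^ m) * ENNReal.ofReal (4/3) := by
      simp_rw [hFval]
      rw [ENNReal.tsum_mul_left, ENNReal.tsum_geometric]
      congr 1
      have h14 : (1:ℝ≥0∞) - ENNReal.ofReal (1/4) = ENNReal.ofReal (3/4) := by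
        rw [← ENNReal.ofReal_one, ← ENNReal.ofReal_sub _ (by norm_num)]
        norm_num
      rw [h14, ← ENNReal.ofReal_inv_of_pos (by norm_num)]
      norm_num
    have step4 : ENNReal.ofReal ((4:ℝ) ^ m) * ENNReal.ofReal (4/3) ≤
        ENNReal.ofReal (4 / 3 * d ^ 2) := by
      rw [← ENNReal.ofReal_mul (by positivity)]
      refine ENNReal.ofReal_le_ofReal ?_
      have h4m : (4:ℝ) ^ m = (2:ℝ) ^ m * (2:ℝ) ^ m := by
        rw [show (4:ℝ) = 2 * 2 by norm_num, mul_zpow]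
      have : (4:ℝ) ^ m ≤ d ^ 2 := by
        rw [h4m, pow_two]
        exact mul_le_mul h2m h2m (by positivity) hd.le
      nlinarith
    calc ∑' k : ℤ, (if (2:ℝ) ^ k < d then ENNReal.ofReal ((4:ℝ) ^ k) else 0)
        ≤ ∑' k : ℤ, F k := step1
      _ = ∑' j : ℕ, F (m - j) := step2
      _ = ENNReal.ofReal ((4:ℝ) ^ m) * ENNReal.ofReal (4/3) := step3
      _ ≤ ENNReal.ofReal (4 / 3 * d ^ 2) := step4
  · have : ∀ k : ℤ, (if (2:ℝ) ^ k < d then ENNReal.ofReal ((4:ℝ) ^ k) else 0) = 0 := by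
      intro k
      rw [if_neg]
      intro h
      exact hd ((zpow_pos (by norm_num : (0:ℝ) < 2) k).trans h)
    simp [this]

theorem gagliardo_ge_level_sum (n : ℕ) (hn : 1 ≤ n) (s : ℝ) (hs : s ∈ Ioo (0:ℝ) 1) :
    ∃ c > (0:ℝ), ∀ f : EuclideanSpace ℝ (Fin n) → ℝ,
      Measurable f → eLpNorm f ⊤ volume < ⊤ → HasCompactSupport f →
      ∀ a : ℤ → ℝ,
        (∀ k : ℤ, a k = (volume {x | (2:ℝ) ^ k < |f x|}).toReal) →
        ENNReal.ofReal c *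
            ∑' k : {k : ℤ // a k ≠ 0},
              ENNReal.ofReal
                (a ((k : ℤ) + 1) * a (k : ℤ) ^ (-(2 * s / (n : ℝ))) * (2:ℝ) ^ (2 * (k : ℤ))) ≤
          ∫⁻ x, ∫⁻ y, ENNReal.ofReal (|f x - f y| ^ 2 / ‖x - y‖ ^ ((n : ℝ) + 2 * s)) := by
  obtain ⟨hs0, hs1⟩ := hs
  haveI : NeZero n := ⟨by omega⟩
  set E := EuclideanSpace ℝ (Fin n) with hE
  haveI : Nontrivial E := by
    rw [hE]; infer_instance
  haveI : NullSingletonClass (volume : Measure E) := by infer_instance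
  have hnR : (0:ℝ) < n := by exact_mod_cast hn
  have hn0 : (n:ℝ) ≠ 0 := hnR.ne'
  set p : ℝ := n + 2 * s with hp
  have hp0 : (0:ℝ) < p := by positivity
  set ω : ℝ := (volume (Metric.ball (0 : E) 1)).toReal with hω
  have hω0 : 0 < ω := ENNReal.toReal_pos (Metric.measure_ball_pos volume _ one_pos).ne' measure_ball_lt_top.ne
  refine ⟨3 / 4 * (2 / ω) ^ (-(p / n)), by positivity, ?_⟩
  intro f hf _ hsupp a ha
  -- basic facts
  set A : ℤ → Set E := fun k => {x | (2:ℝ) ^ k < |f x|} with hA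
  have hAmeas : ∀ k, MeasurableSet (A k) := fun k =>
    measurableSet_lt measurable_const hf.abs
  have hAfin : ∀ k, volume (A k) < ⊤ := by
    intro k
    refine lt_of_le_of_lt (measure_mono ?_) hsupp.isCompact.measure_lt_top
    intro x hx
    have : f x ≠ 0 := by
      intro h0
      simp only [hA, mem_setOf_eq, h0, abs_zero] at hx
      exact absurd hx (not_lt.2 (zpow_pos (by norm_num : (0:ℝ) < 2) k).le)
    exact subset_tsupport f this
  have hμA : ∀ k, volume (A k) = ENNReal.ofReal (a k) := by
    intro k
    rw [ha k, ENNReal.ofReal_toReal (hAfin k).ne]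
  have ha_nonneg : ∀ k, 0 ≤ a k := by
    intro k; rw [ha k]; exact ENNReal.toReal_nonneg
  -- weight
  set w : E → E → ℝ≥0∞ := fun x y => ENNReal.ofReal (‖x - y‖ ^ (-p)) with hw
  have hwmeas : Measurable (fun q : E × E => w q.1 q.2) := by
    exact ((measurable_fst.sub measurable_snd).norm.pow measurable_const).ennreal_ofReal
  -- summand
  set g : ℤ → E → E → ℝ≥0∞ := fun k x y =>
    Set.indicator (A (k + 1) ×ˢ (A k)ᶜ) (fun _ => ENNReal.ofReal ((4:ℝ) ^ k)) (x, y) * w x y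
    with hg
  have hgmeas : ∀ k, Measurable (fun q : E × E => g k q.1 q.2) := by
    intro k
    exact (measurable_const.indicator ((hAmeas (k+1)).prod (hAmeas k).compl)).mul hwmeas
  -- key product identity
  have hkey : ∀ x y : E, ENNReal.ofReal (|f x - f y| ^ 2) * w x y =
      ENNReal.ofReal (|f x - f y| ^ 2 / ‖x - y‖ ^ p) := by
    intro x y
    rcases eq_or_lt_of_le (norm_nonneg (x - y)) with h0 | h0
    · rw [hw]
      simp only [← h0]
      rw [Real.zero_rpow (neg_ne_zero.2 hp0.ne'), Real.zero_rpow hp0.ne']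
      simp
    · rw [hw]
      simp only
      rw [Real.rpow_neg (le_of_lt h0), div_eq_mul_inv, ENNReal.ofReal_mul (by positivity)]
  -- pointwise bound
  have hpt : ∀ x y : E, ∑' k : ℤ, g k x y ≤
      ENNReal.ofReal (4/3) * ENNReal.ofReal (|f x - f y| ^ 2 / ‖x - y‖ ^ p) := by
    intro x y
    have h1 : ∑' k : ℤ, g k x y =
        (∑' k : ℤ, Set.indicator (A (k + 1) ×ˢ (A k)ᶜ)
          (fun _ => ENNReal.ofReal ((4:ℝ) ^ k)) (x, y)) * w x y := by
      rw [hg, ENNReal.tsum_mul_right]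
    have h2 : ∀ k : ℤ, Set.indicator (A (k + 1) ×ˢ (A k)ᶜ)
        (fun _ => ENNReal.ofReal ((4:ℝ) ^ k)) (x, y) ≤
        (if (2:ℝ) ^ k < |f x - f y| then ENNReal.ofReal ((4:ℝ) ^ k) else 0) := by
      intro k
      by_cases hmem : (x, y) ∈ A (k + 1) ×ˢ (A k)ᶜ
      · obtain ⟨hx, hy⟩ := hmem
        have hx' : (2:ℝ) ^ (k+1) < |f x| := hx
        have hy' : ¬ (2:ℝ) ^ k < |f y| := hy
        have hd : (2:ℝ) ^ k < |f x - f y| := by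
          have h22 : (2:ℝ) ^ (k+1) = 2 ^ k * 2 := by
            rw [zpow_add₀ (by norm_num : (2:ℝ) ≠ 0), zpow_one]
          have := abs_sub_abs_le_abs_sub (f x) (f y)
          push_neg at hy'
          nlinarith [zpow_pos (by norm_num : (0:ℝ) < 2) k]
        rw [Set.indicator_of_mem (by exact ⟨hx, hy⟩), if_pos hd]
      · rw [Set.indicator_of_notMem hmem]
        exact zero_le
    calc ∑' k : ℤ, g k x y
        ≤ (∑' k : ℤ, (if (2:ℝ) ^ k < |f x - f y| then ENNReal.ofReal ((4:ℝ) ^ k) else 0)) *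
            w x y := by
          rw [h1]; exact mul_le_mul_left (ENNReal.tsum_le_tsum h2) _
      _ ≤ ENNReal.ofReal (4/3 * |f x - f y| ^ 2) * w x y := by
          exact mul_le_mul_left (geom_aux _) _
      _ = ENNReal.ofReal (4/3) * (ENNReal.ofReal (|f x - f y| ^ 2) * w x y) := by
          rw [ENNReal.ofReal_mul (by norm_num), mul_assoc]
      _ = ENNReal.ofReal (4/3) * ENNReal.ofReal (|f x - f y| ^ 2 / ‖x - y‖ ^ p) := by
          rw [hkey]
  -- Tonelli
  have hTon : ∑' k : ℤ, ∫⁻ x, ∫⁻ y, g k x y = ∫⁻ x, ∫⁻ y, ∑' k : ℤ, g k x y := by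
    have hyint : ∀ x, ∫⁻ y, ∑' k : ℤ, g k x y = ∑' k : ℤ, ∫⁻ y, g k x y := by
      intro x
      exact lintegral_tsum fun k => ((hgmeas k).comp measurable_prodMk_left).aemeasurable
    calc ∑' k : ℤ, ∫⁻ x, ∫⁻ y, g k x y
        = ∫⁻ x, ∑' k : ℤ, ∫⁻ y, g k x y := by
          refine (lintegral_tsum fun k => ?_).symm
          exact ((hgmeas k).lintegral_prod_right').aemeasurable
      _ = ∫⁻ x, ∫⁻ y, ∑' k : ℤ, g k x y := by
          refine lintegral_congr fun x => (hyint x).symm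
  -- per-k lower bound
  have hTk : ∀ k : ℤ, a k ≠ 0 →
      ENNReal.ofReal ((2/ω) ^ (-(p/n)) *
        (a (k + 1) * a k ^ (-(2 * s / (n:ℝ))) * (2:ℝ) ^ (2 * k))) ≤
      ∫⁻ x, ∫⁻ y, g k x y := by
    intro k hk
    have hak : 0 < a k := lt_of_le_of_ne (ha_nonneg k) (Ne.symm hk)
    set R : ℝ := (2 * a k / ω) ^ ((n:ℝ)⁻¹) with hR
    have hR0 : 0 < R := Real.rpow_pos_of_pos (by positivity) _
    -- ball volume
    have hball : ∀ x : E, volume (Metric.ball x R) = ENNReal.ofReal (2 * a k) := by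
      intro x
      rw [Measure.addHaar_ball volume x hR0.le]
      have hfr : Module.finrank ℝ E = n := finrank_euclideanSpace_fin
      rw [hfr, show volume (Metric.ball (0:E) 1) = ENNReal.ofReal ω from
        (ENNReal.ofReal_toReal measure_ball_lt_top.ne).symm,
        ← ENNReal.ofReal_mul (by positivity)]
      congr 1
      rw [hR, ← Real.rpow_natCast ((2 * a k / ω) ^ ((n:ℝ)⁻¹)) n, ← Real.rpow_mul (by positivity),
        inv_mul_cancel₀ hn0, Real.rpow_one, div_mul_cancel₀ _ hω0.ne']
    -- inner bound
    have hinner : ∀ x : E,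
        ENNReal.ofReal (R ^ (-p)) * ENNReal.ofReal (a k) ≤ ∫⁻ y in (A k)ᶜ, w x y := by
      intro x
      set B : Set E := Metric.ball x R \ {x} with hB
      have hBmeas : MeasurableSet B := measurableSet_ball.diff (measurableSet_singleton x)
      have hBvol : volume B = ENNReal.ofReal (2 * a k) := by
        rw [hB, measure_diff_null (μ := (volume : Measure E)) (measure_singleton x), hball x]
      have hcap : ENNReal.ofReal (a k) ≤ volume ((A k)ᶜ ∩ B) := by
        have hsub : B ⊆ ((A k)ᶜ ∩ B) ∪ A k := by
          intro y hy
          by_cases hyA : y ∈ A k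
          · exact Or.inr hyA
          · exact Or.inl ⟨hyA, hy⟩
        have h1 : volume B ≤ volume (((A k)ᶜ ∩ B) ∪ A k) := measure_mono hsub
        have this := h1.trans (measure_union_le _ _)
        rw [hBvol, hμA k] at this
        have h2 : ENNReal.ofReal (2 * a k) = ENNReal.ofReal (a k) + ENNReal.ofReal (a k) := by
          rw [← ENNReal.ofReal_add (ha_nonneg k) (ha_nonneg k)]; ring_nf
        rw [h2] at this
        exact (ENNReal.add_le_add_iff_right ENNReal.ofReal_ne_top).mp this
      calc ENNReal.ofReal (R ^ (-p)) * ENNReal.ofReal (a k)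
          ≤ ENNReal.ofReal (R ^ (-p)) * volume ((A k)ᶜ ∩ B) := by
            exact mul_le_mul_right hcap _
        _ = ∫⁻ _ in (A k)ᶜ ∩ B, ENNReal.ofReal (R ^ (-p)) := by
            rw [setLIntegral_const]
        _ ≤ ∫⁻ y in (A k)ᶜ ∩ B, w x y := by
            refine setLIntegral_mono' ((hAmeas k).compl.inter hBmeas) fun y hy => ?_
            have hyB : y ∈ B := hy.2
            have hylt : ‖x - y‖ < R := by
              have : dist y x < R := Metric.mem_ball.mp hyB.1
              rwa [dist_comm, dist_eq_norm] at this
            have hy0 : 0 < ‖x - y‖ := by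
              rw [norm_pos_iff, sub_ne_zero]
              exact fun h => hyB.2 (by simp [h.symm])
            exact ENNReal.ofReal_le_ofReal
              (Real.rpow_le_rpow_of_nonpos hy0 hylt.le (neg_nonpos.2 hp0.le))
        _ ≤ ∫⁻ y in (A k)ᶜ, w x y := lintegral_mono_set inter_subset_left
    -- iterated integral
    have hTeq : ∫⁻ x, ∫⁻ y, g k x y =
        ∫⁻ x in A (k + 1), ∫⁻ y in (A k)ᶜ, ENNReal.ofReal ((4:ℝ) ^ k) * w x y := by
      have hyeq : ∀ x, ∫⁻ y, g k x y =
          Set.indicator (A (k + 1))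
            (fun x => ∫⁻ y in (A k)ᶜ, ENNReal.ofReal ((4:ℝ) ^ k) * w x y) x := by
        intro x
        by_cases hx : x ∈ A (k + 1)
        · rw [Set.indicator_of_mem hx, ← lintegral_indicator (hAmeas k).compl]
          refine lintegral_congr fun y => ?_
          rw [hg]
          simp only
          by_cases hy : y ∈ (A k)ᶜ
          · rw [Set.indicator_of_mem (show (x, y) ∈ A (k+1) ×ˢ (A k)ᶜ from ⟨hx, hy⟩),
              Set.indicator_of_mem hy]
          · rw [Set.indicator_of_notMem (fun h => hy h.2), Set.indicator_of_notMem hy,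
              zero_mul]
        · rw [Set.indicator_of_notMem hx]
          have : ∀ y, g k x y = 0 := by
            intro y
            rw [hg]
            simp only
            rw [Set.indicator_of_notMem (fun h => hx h.1), zero_mul]
          simp [this]
      rw [lintegral_congr hyeq, lintegral_indicator (hAmeas (k+1))]
    -- lower bound the iterated integral
    have hlow : ENNReal.ofReal (a (k+1)) *
        (ENNReal.ofReal ((4:ℝ) ^ k) * (ENNReal.ofReal (R ^ (-p)) * ENNReal.ofReal (a k))) ≤
        ∫⁻ x, ∫⁻ y, g k x y := by
      rw [hTeq]
      have hinner2 : ∀ x : E,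
          ENNReal.ofReal ((4:ℝ) ^ k) * (ENNReal.ofReal (R ^ (-p)) * ENNReal.ofReal (a k)) ≤
          ∫⁻ y in (A k)ᶜ, ENNReal.ofReal ((4:ℝ) ^ k) * w x y := by
        intro x
        rw [lintegral_const_mul' _ _ ENNReal.ofReal_ne_top]
        exact mul_le_mul_right (hinner x) _
      calc ENNReal.ofReal (a (k+1)) *
            (ENNReal.ofReal ((4:ℝ) ^ k) * (ENNReal.ofReal (R ^ (-p)) * ENNReal.ofReal (a k)))
          = (ENNReal.ofReal ((4:ℝ) ^ k) * (ENNReal.ofReal (R ^ (-p)) * ENNReal.ofReal (a k))) *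
              volume (A (k+1)) := by
            rw [hμA (k+1)]; ring
        _ = ∫⁻ _ in A (k+1), ENNReal.ofReal ((4:ℝ) ^ k) *
              (ENNReal.ofReal (R ^ (-p)) * ENNReal.ofReal (a k)) := by
            rw [setLIntegral_const]
        _ ≤ ∫⁻ x in A (k+1), ∫⁻ y in (A k)ᶜ, ENNReal.ofReal ((4:ℝ) ^ k) * w x y := by
            exact lintegral_mono fun x => hinner2 x
    -- real arithmetic
    have hreal : (2/ω) ^ (-(p/n)) *
        (a (k + 1) * a k ^ (-(2 * s / (n:ℝ))) * (2:ℝ) ^ (2 * k)) =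
        a (k+1) * ((4:ℝ) ^ k * (R ^ (-p) * a k)) := by
      have hRp : R ^ (-p) = (2/ω) ^ (-(p/n)) * a k ^ (-(p/n)) := by
        rw [hR, ← Real.rpow_mul (by positivity),
          show (n:ℝ)⁻¹ * (-p) = -(p/n) by field_simp,
          show 2 * a k / ω = 2/ω * a k by ring,
          Real.mul_rpow (by positivity) hak.le]
      have h4 : (2:ℝ) ^ (2 * k) = (4:ℝ) ^ k := by
        rw [show (4:ℝ) = (2:ℝ) ^ (2:ℤ) by norm_num, ← zpow_mul]
      have haexp : a k ^ (-(p/n)) * a k = a k ^ (-(2 * s / (n:ℝ))) := by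
        nth_rewrite 2 [← Real.rpow_one (a k)]
        rw [← Real.rpow_add hak]
        congr 1
        rw [hp]
        field_simp
        ring
      rw [h4, hRp, ← haexp]
      ring
    rw [hreal, ENNReal.ofReal_mul (ha_nonneg (k+1)),
      ENNReal.ofReal_mul (by positivity : (0:ℝ) ≤ (4:ℝ) ^ k),
      ENNReal.ofReal_mul (by positivity : (0:ℝ) ≤ R ^ (-p))]
    exact hlow
  -- assemble
  have hsum : ∑' k : {k : ℤ // a k ≠ 0},
      ENNReal.ofReal ((2/ω) ^ (-(p/n)) *
        (a ((k:ℤ) + 1) * a (k:ℤ) ^ (-(2 * s / (n:ℝ))) * (2:ℝ) ^ (2 * (k:ℤ)))) ≤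
      ∑' k : ℤ, ∫⁻ x, ∫⁻ y, g k x y := by
    calc ∑' k : {k : ℤ // a k ≠ 0},
        ENNReal.ofReal ((2/ω) ^ (-(p/n)) *
          (a ((k:ℤ) + 1) * a (k:ℤ) ^ (-(2 * s / (n:ℝ))) * (2:ℝ) ^ (2 * (k:ℤ))))
        ≤ ∑' k : {k : ℤ // a k ≠ 0}, ∫⁻ x, ∫⁻ y, g (k:ℤ) x y :=
          ENNReal.tsum_le_tsum fun k => hTk k k.2
      _ = ∑' k : ℤ, Set.indicator {k : ℤ | a k ≠ 0} (fun k => ∫⁻ x, ∫⁻ y, g k x y) k :=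
          tsum_subtype {k : ℤ | a k ≠ 0} (fun k => ∫⁻ x, ∫⁻ y, g k x y)
      _ ≤ ∑' k : ℤ, ∫⁻ x, ∫⁻ y, g k x y :=
          ENNReal.tsum_le_tsum fun k => Set.indicator_le_self _ _ k
  calc ENNReal.ofReal (3 / 4 * (2 / ω) ^ (-(p / n))) *
      ∑' k : {k : ℤ // a k ≠ 0},
        ENNReal.ofReal (a ((k:ℤ) + 1) * a (k:ℤ) ^ (-(2 * s / (n:ℝ))) * (2:ℝ) ^ (2 * (k:ℤ)))
      = ENNReal.ofReal (3/4) * ∑' k : {k : ℤ // a k ≠ 0},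
          ENNReal.ofReal ((2/ω) ^ (-(p/n)) *
            (a ((k:ℤ) + 1) * a (k:ℤ) ^ (-(2 * s / (n:ℝ))) * (2:ℝ) ^ (2 * (k:ℤ)))) := by
        rw [ENNReal.ofReal_mul (by norm_num : (0:ℝ) ≤ 3/4), mul_assoc, ← ENNReal.tsum_mul_left]
        congr 1
        exact tsum_congr fun k => (ENNReal.ofReal_mul (by positivity)).symm
    _ ≤ ENNReal.ofReal (3/4) * ∑' k : ℤ, ∫⁻ x, ∫⁻ y, g k x y := mul_le_mul_right hsum _
    _ = ENNReal.ofReal (3/4) * ∫⁻ x, ∫⁻ y, ∑' k : ℤ, g k x y := by rw [hTon]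
    _ ≤ ENNReal.ofReal (3/4) * ∫⁻ x, ∫⁻ y,
          ENNReal.ofReal (4/3) * ENNReal.ofReal (|f x - f y| ^ 2 / ‖x - y‖ ^ p) :=
        mul_le_mul_right (lintegral_mono fun x => lintegral_mono fun y => hpt x y) _
    _ = ENNReal.ofReal (3/4) * (ENNReal.ofReal (4/3) *
          ∫⁻ x, ∫⁻ y, ENNReal.ofReal (|f x - f y| ^ 2 / ‖x - y‖ ^ p)) := by
        congr 1
        rw [← lintegral_const_mul' _ _ ENNReal.ofReal_ne_top]
        exact lintegral_congr fun x => lintegral_const_mul' _ _ ENNReal.ofReal_ne_top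
    _ = ∫⁻ x, ∫⁻ y, ENNReal.ofReal (|f x - f y| ^ 2 / ‖x - y‖ ^ p) := by
        rw [← mul_assoc, ← ENNReal.ofReal_mul (by norm_num)]
        norm_num
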